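/- Let γ ∈ ℝ, t₀ ≤ T, and let (Ω, Σ, K) : [t₀, T] → ℝ³ be continuously differentiable and satisfy (Ω', Σ', K') = G_γ(Ω, Σ, K) on [t₀, T]. If Ω(t₀)² + Σ(t₀)² + K(t₀) < 1, then Ω(t)² + Σ(t)² + K(t) < 1 for every t ∈ [t₀, T]. -/

import Mathlib

/-- The averaged Bianchi V guiding vector field `G_γ(Ω, Σ, K)`. -/
noncomputable def GBV (γ : ℝ) : ℝ × ℝ × ℝ → ℝ × ℝ × ℝ := fun p =>
  (-(1 / 2) * p.1 *
      (3 * γ * (p.2.1 ^ 2 + p.1 ^ 2 + p.2.2 - 1) - 6 * p.2.1 ^ 2 - 3 * p.1 ^ 2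
        - 2 * p.2.2 + 3),
   (1 / 2) * p.2.1 *
      (-(3 * γ) * (p.2.1 ^ 2 + p.1 ^ 2 + p.2.2 - 1) + 6 * p.2.1 ^ 2 + 3 * p.1 ^ 2
        + 2 * p.2.2 - 6),
   -p.2.2 *
      (3 * γ * (p.2.1 ^ 2 + p.1 ^ 2 + p.2.2 - 1) - 6 * p.2.1 ^ 2 - 3 * p.1 ^ 2
        - 2 * p.2.2 + 2))

/-- Forward invariance under the averaged Bianchi V flow of the region
`Ω² + Σ² + K < 1` (positivity of matter energy density): if a solution on
`[t₀, T]` starts with `Ω² + Σ² + K < 1`, then it stays there. -/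
theorem bianchiV_forward_invariance (γ t₀ T : ℝ) (hT : t₀ ≤ T)
    (Ω S K : ℝ → ℝ)
    (hode : ∀ t ∈ Set.Icc t₀ T,
      HasDerivAt (fun t => (Ω t, S t, K t)) (GBV γ (Ω t, S t, K t)) t)
    (hinit : (Ω t₀) ^ 2 + (S t₀) ^ 2 + K t₀ < 1) :
    ∀ t ∈ Set.Icc t₀ T, (Ω t) ^ 2 + (S t) ^ 2 + K t < 1 := by
  set m : ℝ → ℝ := fun t => (Ω t) ^ 2 + (S t) ^ 2 + K t - 1 with hm_def
  set c : ℝ → ℝ := fun t =>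
    6 * (S t) ^ 2 + 3 * (Ω t) ^ 2 + 2 * K t
      - 3 * γ * ((Ω t) ^ 2 + (S t) ^ 2 + K t) with hc_def
  -- component derivatives
  have hΩ : ∀ t ∈ Set.Icc t₀ T,
      HasDerivAt Ω (-(1 / 2) * Ω t *
        (3 * γ * ((S t) ^ 2 + (Ω t) ^ 2 + K t - 1) - 6 * (S t) ^ 2 - 3 * (Ω t) ^ 2
          - 2 * K t + 3)) t := fun t ht => (hode t ht).fst
  have hS : ∀ t ∈ Set.Icc t₀ T,
      HasDerivAt S ((1 / 2) * S t *
        (-(3 * γ) * ((S t) ^ 2 + (Ω t) ^ 2 + K t - 1) + 6 * (S t) ^ 2 + 3 * (Ω t) ^ 2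
          + 2 * K t - 6)) t := fun t ht => (hode t ht).snd.fst
  have hK : ∀ t ∈ Set.Icc t₀ T,
      HasDerivAt K (-K t *
        (3 * γ * ((S t) ^ 2 + (Ω t) ^ 2 + K t - 1) - 6 * (S t) ^ 2 - 3 * (Ω t) ^ 2
          - 2 * K t + 2)) t := fun t ht => (hode t ht).snd.snd
  have hm : ∀ t ∈ Set.Icc t₀ T, HasDerivAt m (c t * m t) t := by
    intro t ht
    have h := ((((hΩ t ht).pow 2).add ((hS t ht).pow 2)).add (hK t ht)).sub_const 1
    refine h.congr_deriv ?_
    simp only [hm_def, hc_def]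
    norm_num
    ring
  have hmc : ContinuousOn m (Set.Icc t₀ T) := fun t ht =>
    ((hm t ht).continuousAt).continuousWithinAt
  -- bound on c
  have hcc : ContinuousOn c (Set.Icc t₀ T) := by
    intro t ht
    have hΩc := ((hΩ t ht).continuousAt)
    have hSc := ((hS t ht).continuousAt)
    have hKc := ((hK t ht).continuousAt)
    exact ((((continuousAt_const.mul (hSc.pow 2)).add
      (continuousAt_const.mul (hΩc.pow 2))).add (continuousAt_const.mul hKc)).sub
      (continuousAt_const.mul (((hΩc.pow 2).add (hSc.pow 2)).add hKc))).continuousWithinAt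
  obtain ⟨C, hC⟩ := (isCompact_Icc).exists_bound_of_continuousOn hcc
  have hC0 : 0 ≤ max C 0 := le_max_right _ _
  -- main claim: m stays negative
  have key : ∀ t ∈ Set.Icc t₀ T, m t ≠ 0 := by
    rintro t₁ ht₁ hz
    -- reverse Grönwall on [0, t₁ - t₀] for f s = m (t₁ - s)
    have hbound := norm_le_gronwallBound_of_norm_deriv_right_le
      (f := fun s => m (t₁ - s)) (f' := fun s => -(c (t₁ - s) * m (t₁ - s)))
      (δ := 0) (K := max C 0) (ε := 0) (a := 0) (b := t₁ - t₀)
      ?_ ?_ ?_ ?_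
    · have h2 := hbound (t₁ - t₀) ⟨by linarith [ht₁.1], le_refl _⟩
      rw [sub_sub_cancel, gronwallBound_ε0, zero_mul] at h2
      have hmz : m t₀ = 0 := norm_le_zero_iff.mp h2
      have hmt₀ : m t₀ < 0 := by simp only [hm_def]; linarith
      exact absurd hmz hmt₀.ne
    · intro s hs
      have : t₁ - s ∈ Set.Icc t₀ T := ⟨by linarith [hs.2, ht₁.1], by linarith [hs.1, ht₁.2]⟩
      exact (hmc.comp ((continuous_const.sub continuous_id).continuousOn)
        (fun x (hx : x ∈ Set.Icc (0:ℝ) (t₁ - t₀)) =>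
          ⟨by simp only [Pi.sub_apply, id_eq]; linarith [hx.2, ht₁.1],
           by simp only [Pi.sub_apply, id_eq]; linarith [hx.1, ht₁.2]⟩)) s hs
    · intro s hs
      have hmem : t₁ - s ∈ Set.Icc t₀ T :=
        ⟨by linarith [hs.2, ht₁.1], by linarith [hs.1, ht₁.2]⟩
      have h1 : HasDerivAt (fun s : ℝ => t₁ - s) (-1) s := by
        simpa using (hasDerivAt_id s).const_sub t₁
      have := (hm (t₁ - s) hmem).comp s h1
      simpa [mul_comm, Function.comp_def] using this.hasDerivWithinAt
    · simp [hz]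
    · intro s hs
      have hmem : t₁ - s ∈ Set.Icc t₀ T :=
        ⟨by linarith [hs.2.le, ht₁.1], by linarith [hs.1, ht₁.2]⟩
      have : |c (t₁ - s)| ≤ max C 0 := le_trans (hC _ hmem) (le_max_left _ _)
      calc ‖-(c (t₁ - s) * m (t₁ - s))‖ = |c (t₁ - s)| * ‖m (t₁ - s)‖ := by
            rw [norm_neg, norm_mul, Real.norm_eq_abs]
        _ ≤ max C 0 * ‖m (t₁ - s)‖ + 0 := by
            nlinarith [norm_nonneg (m (t₁ - s)), abs_nonneg (c (t₁ - s))]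
  -- conclude by IVT
  intro t ht
  by_contra hge
  push_neg at hge
  have hmt : 0 ≤ m t := by simp only [hm_def]; linarith
  have hmt₀ : m t₀ < 0 := by simp only [hm_def]; linarith
  have hsub : Set.Icc t₀ t ⊆ Set.Icc t₀ T := Set.Icc_subset_Icc le_rfl ht.2
  have hiv := intermediate_value_Icc ht.1 (hmc.mono hsub)
  have h0 : (0:ℝ) ∈ Set.Icc (m t₀) (m t) := ⟨hmt₀.le, hmt⟩
  obtain ⟨t₁, ht₁, hz⟩ := hiv h0
  exact key t₁ (hsub ht₁) hz
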